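/- Let q ≥ 4 be an integer and let λ ≥ 0 and z ≥ 0 be real numbers. If z^{q−1} − λ·z − 1 ≤ 0, then z ≤ λ^{1/(q−2)} + 1. -/
import Mathlib


theorem stmt4 (q : ℕ) (hq : 4 ≤ q) (lam z : ℝ) (hlam : 0 ≤ lam) (hz : 0 ≤ z)
    (h : z ^ (q - 1) - lam * z - 1 ≤ 0) :
    z ≤ lam ^ ((1 : ℝ) / ((q : ℝ) - 2)) + 1 := by
  set L : ℝ := lam ^ ((1 : ℝ) / ((q : ℝ) - 2)) with hL
  have hLnn : 0 ≤ L := Real.rpow_nonneg hlam _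
  by_contra hcon
  push_neg at hcon
  set n : ℕ := q - 2 with hn
  have hn2 : 2 ≤ n := by omega
  have hq1 : q - 1 = n + 1 := by omega
  have hcast : ((n : ℝ)) = (q : ℝ) - 2 := by
    have : (q : ℝ) = ((n + 2 : ℕ) : ℝ) := by norm_cast; omega
    rw [this]; push_cast; ring
  have hne : (q : ℝ) - 2 ≠ 0 := by
    have : (4 : ℝ) ≤ (q : ℝ) := by exact_mod_cast hq
    linarith
  have hLn : L ^ n = lam := by
    rw [hL, ← Real.rpow_natCast (lam ^ ((1 : ℝ) / ((q : ℝ) - 2))) n,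
      ← Real.rpow_mul hlam, hcast, one_div_mul_cancel hne, Real.rpow_one]
  have hz1 : 1 < z := by nlinarith
  have hpow : (L + 1) ^ n < z ^ n := by
    apply pow_lt_pow_left₀ hcon (by positivity)
    omega
  have hsum : lam + 1 ≤ (L + 1) ^ n := by
    calc lam + 1 = L ^ n + 1 ^ n := by rw [hLn, one_pow]
      _ ≤ (L + 1) ^ n := pow_add_pow_le hLnn zero_le_one (by omega)
  have hzn : lam + 1 < z ^ n := lt_of_le_of_lt hsum hpow
  have : lam * z + 1 < z ^ (q - 1) := by
    rw [hq1, pow_succ]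
    nlinarith
  linarith
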